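/- Addition of constructed numbers is associative: for all constructor numbers x, y and z (over a fixed condition algebra C), there exists a CN number term c such that (x + y) + z →̲ c and x + (y + z) →̲ c. -/
import Mathlib


/-- A condition algebra with bracket: a commutative monoid with inversion,
two copy operations, and a bracket operation. -/
class CondAlg (C : Type*) extends CommMonoid C where
  inv : C → C
  c0 : C → C
  c1 : C → C
  brkt : C → C
  inv_inv : ∀ A : C, inv (inv A) = A
  inv_mul : ∀ A B : C, inv (A * B) = inv A * inv B
  c0_mul : ∀ A B : C, c0 (A * B) = c0 A * c0 B
  c1_mul : ∀ A B : C, c1 (A * B) = c1 A * c1 B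
  copy_cancel : ∀ A : C, c0 A * inv (c1 A) = 1
  copy_eq : ∀ A : C, c0 A * c1 A = A
  brkt_one : brkt (1 : C) = 1
  brkt_mul : ∀ A B : C, brkt A * brkt B = brkt (A * B)

/-- CN number terms over the condition algebra `C`. -/
inductive CN (C : Type*) : Type _
  | zero : C → CN C                 -- A·0
  | suc : C → CN C → CN C           -- (A suc)a
  | ann : C → C → CN C → CN C       -- (A,B ann)a
  | copy0 : CN C → CN C             -- a⁰
  | copy1 : CN C → CN C             -- a¹
  | add : CN C → CN C → CN C        -- a + b
  | sub : CN C → CN C → CN C        -- a − b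

variable {C : Type*} [CondAlg C]

open CondAlg

/-- CNSmooth equality `≃` on CN number terms. -/
inductive CNSmooth : CN C → CN C → Prop
  | refl (a : CN C) : CNSmooth a a
  | symm {a b} : CNSmooth a b → CNSmooth b a
  | trans {a b c} : CNSmooth a b → CNSmooth b c → CNSmooth a c
  -- congruence rules
  | suc_congr (A : C) {a b} : CNSmooth a b → CNSmooth (.suc A a) (.suc A b)
  | ann_congr (A B : C) {a b} : CNSmooth a b → CNSmooth (.ann A B a) (.ann A B b)
  | copy0_congr {a b} : CNSmooth a b → CNSmooth (.copy0 a) (.copy0 b)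
  | copy1_congr {a b} : CNSmooth a b → CNSmooth (.copy1 a) (.copy1 b)
  | add_congr {a a' b b'} : CNSmooth a a' → CNSmooth b b' →
      CNSmooth (.add a b) (.add a' b')
  | sub_congr {a a' b b'} : CNSmooth a a' → CNSmooth b b' →
      CNSmooth (.sub a b) (.sub a' b')
  -- exchange laws
  | exch_suc_suc (A B : C) (a : CN C) :
      CNSmooth (.suc A (.suc B a)) (.suc B (.suc A a))
  | exch_ann_suc (A₀ A₁ B : C) (a : CN C) :
      CNSmooth (.ann A₀ A₁ (.suc B a)) (.suc B (.ann A₀ A₁ a))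
  | exch_ann_ann (A₀ A₁ B₀ B₁ : C) (a : CN C) :
      CNSmooth (.ann A₀ A₁ (.ann B₀ B₁ a)) (.ann B₀ B₁ (.ann A₀ A₁ a))
  | exch_ann_ann' (A₀ A₁ B₀ B₁ : C) (a : CN C) :
      CNSmooth (.ann A₀ A₁ (.ann B₀ B₁ a)) (.ann A₀ B₁ (.ann B₀ A₁ a))
  | exch_suc_ann (A B₀ B₁ : C) (a : CN C) :
      CNSmooth (.suc A (.ann B₀ B₁ a)) (.suc B₀ (.ann A B₁ a))
  -- bracket laws
  | brkt_zero (A : C) : CNSmooth (.zero A) (.zero (brkt A))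
  | brkt_suc (A : C) (a : CN C) : CNSmooth (.suc A a) (.suc (brkt A) a)
  | brkt_ann_left (A B : C) (a : CN C) :
      CNSmooth (.ann A B a) (.ann (brkt A) B a)
  | brkt_ann_right (A B : C) (a : CN C) :
      CNSmooth (.ann A B a) (.ann A (brkt B) a)
  -- copy-distribution laws
  | copy0_zero (A : C) : CNSmooth (.copy0 (.zero A)) (.zero (c0 A))
  | copy1_zero (A : C) : CNSmooth (.copy1 (.zero A)) (.zero (c1 A))
  | copy0_suc (A : C) (a : CN C) :
      CNSmooth (.copy0 (.suc A a)) (.suc (c0 A) (.copy0 a))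
  | copy1_suc (A : C) (a : CN C) :
      CNSmooth (.copy1 (.suc A a)) (.suc (c1 A) (.copy1 a))
  | copy0_ann (A B : C) (a : CN C) :
      CNSmooth (.copy0 (.ann A B a)) (.ann (c0 A) (c0 B) (.copy0 a))
  | copy1_ann (A B : C) (a : CN C) :
      CNSmooth (.copy1 (.ann A B a)) (.ann (c1 A) (c1 B) (.copy1 a))
  -- inversion-simplification
  | inv_simp (A B : C) (a : CN C) (h : A * inv B = 1) :
      CNSmooth (.ann A B a) a

/-- Equality reduction `→̲`: the smallest reflexive, transitive, congruent
relation containing smooth equality and all instances of the addition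
program rules. -/
inductive CNEqRed : CN C → CN C → Prop
  | refl (a : CN C) : CNEqRed a a
  | trans {a b c} : CNEqRed a b → CNEqRed b c → CNEqRed a c
  -- contains smooth equality
  | of_smooth {a b} : CNSmooth a b → CNEqRed a b
  -- congruence rules
  | suc_congr (A : C) {a b} : CNEqRed a b → CNEqRed (.suc A a) (.suc A b)
  | ann_congr (A B : C) {a b} : CNEqRed a b → CNEqRed (.ann A B a) (.ann A B b)
  | copy0_congr {a b} : CNEqRed a b → CNEqRed (.copy0 a) (.copy0 b)
  | copy1_congr {a b} : CNEqRed a b → CNEqRed (.copy1 a) (.copy1 b)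
  | add_congr {a a' b b'} : CNEqRed a a' → CNEqRed b b' →
      CNEqRed (.add a b) (.add a' b')
  | sub_congr {a a' b b'} : CNEqRed a a' → CNEqRed b b' →
      CNEqRed (.sub a b) (.sub a' b')
  -- addition program rules
  | add_suc (X : C) (x y : CN C) :
      CNEqRed (.add (.suc X x) y) (.suc X (.add x y))
  | add_ann (X₀ X₁ : C) (x y : CN C) :
      CNEqRed (.add (.ann X₀ X₁ x) y) (.ann X₀ X₁ (.add x y))
  | add_zero_suc (X Y : C) (y : CN C) :
      CNEqRed (.add (.zero X) (.suc Y y)) (.suc Y (.add (.zero X) y))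
  | add_zero_ann (X Y₀ Y₁ : C) (y : CN C) :
      CNEqRed (.add (.zero X) (.ann Y₀ Y₁ y)) (.ann Y₀ Y₁ (.add (.zero X) y))
  | add_zero_zero (X Y : C) :
      CNEqRed (.add (.zero X) (.zero Y)) (.zero (CondAlg.brkt (X * Y)))

/-- Constructor numbers: CN terms built only from the constructors
`A·0`, `(A suc)a`, `(A,B ann)a`. -/
inductive IsCon : CN C → Prop
  | zero (A : C) : IsCon (.zero A)
  | suc (A : C) {a} : IsCon a → IsCon (.suc A a)
  | ann (A B : C) {a} : IsCon a → IsCon (.ann A B a)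

/-- Replace the base zero of a constructor number by another term. -/
def CN.wrap : CN C → CN C → CN C
  | .zero _, b => b
  | .suc A a, b => .suc A (a.wrap b)
  | .ann A B a, b => .ann A B (a.wrap b)
  | _, b => b

/-- The base zero condition of a constructor number. -/
def CN.zc : CN C → C
  | .zero A => A
  | .suc _ a => a.zc
  | .ann _ _ a => a.zc
  | _ => 1

theorem wrap_wrap {x : CN C} (hx : IsCon x) (b c : CN C) :
    (x.wrap b).wrap c = x.wrap (b.wrap c) := by
  induction hx with
  | zero A => rfl
  | suc A _ ih => simp only [CN.wrap, ih]
  | ann A B _ ih => simp only [CN.wrap, ih]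

theorem zc_wrap {x : CN C} (hx : IsCon x) (b : CN C) :
    (x.wrap b).zc = b.zc := by
  induction hx with
  | zero A => rfl
  | suc A _ ih => simpa only [CN.wrap, CN.zc] using ih
  | ann A B _ ih => simpa only [CN.wrap, CN.zc] using ih

theorem isCon_wrap {x b : CN C} (hx : IsCon x) (hb : IsCon b) :
    IsCon (x.wrap b) := by
  induction hx with
  | zero A => exact hb
  | suc A _ ih => exact IsCon.suc A ih
  | ann A B _ ih => exact IsCon.ann A B ih

theorem smooth_brkt_base {x : CN C} (hx : IsCon x) :
    CNSmooth x (x.wrap (.zero (brkt x.zc))) := by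
  induction hx with
  | zero A => exact CNSmooth.brkt_zero A
  | suc A _ ih => exact CNSmooth.suc_congr A ih
  | ann A B _ ih => exact CNSmooth.ann_congr A B ih

theorem add_red {x y : CN C} (hx : IsCon x) (hy : IsCon y) :
    CNEqRed (.add x y) (x.wrap (y.wrap (.zero (brkt (x.zc * y.zc))))) := by
  induction hx with
  | zero X =>
    induction hy with
    | zero Y => exact CNEqRed.add_zero_zero X Y
    | suc Y _ ih =>
        exact (CNEqRed.add_zero_suc X Y _).trans (CNEqRed.suc_congr Y ih)
    | ann Y₀ Y₁ _ ih =>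
        exact (CNEqRed.add_zero_ann X Y₀ Y₁ _).trans (CNEqRed.ann_congr Y₀ Y₁ ih)
  | suc A _ ih => exact (CNEqRed.add_suc A _ _).trans (CNEqRed.suc_congr A ih)
  | ann A B _ ih => exact (CNEqRed.add_ann A B _ _).trans (CNEqRed.ann_congr A B ih)

/-- Associativity of addition of constructed numbers. -/
theorem add_assoc_CN (x y z : CN C) (hx : IsCon x) (hy : IsCon y)
    (hz : IsCon z) :
    ∃ c : CN C, CNEqRed (.add (.add x y) z) c ∧
      CNEqRed (.add x (.add y z)) c := by
  set X := x.zc with hX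
  set Y := y.zc with hY
  set Z := z.zc with hZ
  refine ⟨x.wrap (y.wrap (z.wrap (.zero (brkt (brkt (X * Y * Z)))))), ?_, ?_⟩
  · -- left association
    set w : CN C := x.wrap (y.wrap (.zero (brkt (X * Y)))) with hw
    have hwcon : IsCon w := isCon_wrap hx (isCon_wrap hy (IsCon.zero _))
    set z' : CN C := z.wrap (.zero (brkt Z)) with hz'
    have hz'con : IsCon z' := isCon_wrap hz (IsCon.zero _)
    have step1 : CNEqRed (.add (.add x y) z) (.add w z) :=
      CNEqRed.add_congr (add_red hx hy) (CNEqRed.refl z)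
    have step2 : CNEqRed (.add w z) (.add w z') :=
      CNEqRed.add_congr (CNEqRed.refl w) (CNEqRed.of_smooth (smooth_brkt_base hz))
    have step3 := add_red hwcon hz'con
    have hwzc : w.zc = brkt (X * Y) := by
      rw [hw, zc_wrap hx, zc_wrap hy]; rfl
    have hz'zc : z'.zc = brkt Z := by
      rw [hz', zc_wrap hz]; rfl
    have heq : w.wrap (z'.wrap (.zero (brkt (w.zc * z'.zc))))
        = x.wrap (y.wrap (z.wrap (.zero (brkt (brkt (X * Y * Z)))))) := by
      rw [hwzc, hz'zc, CondAlg.brkt_mul, hw, hz',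
        wrap_wrap hx, wrap_wrap hy, wrap_wrap hz]
      rfl
    rw [heq] at step3
    exact (step1.trans step2).trans step3
  · -- right association
    set v : CN C := y.wrap (z.wrap (.zero (brkt (Y * Z)))) with hv
    have hvcon : IsCon v := isCon_wrap hy (isCon_wrap hz (IsCon.zero _))
    set x' : CN C := x.wrap (.zero (brkt X)) with hx'
    have hx'con : IsCon x' := isCon_wrap hx (IsCon.zero _)
    have step1 : CNEqRed (.add x (.add y z)) (.add x v) :=
      CNEqRed.add_congr (CNEqRed.refl x) (add_red hy hz)
    have step2 : CNEqRed (.add x v) (.add x' v) :=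
      CNEqRed.add_congr (CNEqRed.of_smooth (smooth_brkt_base hx)) (CNEqRed.refl v)
    have step3 := add_red hx'con hvcon
    have hvzc : v.zc = brkt (Y * Z) := by
      rw [hv, zc_wrap hy, zc_wrap hz]; rfl
    have hx'zc : x'.zc = brkt X := by
      rw [hx', zc_wrap hx]; rfl
    have heq : x'.wrap (v.wrap (.zero (brkt (x'.zc * v.zc))))
        = x.wrap (y.wrap (z.wrap (.zero (brkt (brkt (X * Y * Z)))))) := by
      rw [hx'zc, hvzc, CondAlg.brkt_mul, mul_assoc, hx', hv,
        wrap_wrap hx, wrap_wrap hy, wrap_wrap hz]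
      rfl
    rw [heq] at step3
    exact (step1.trans step2).trans step3
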